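/- There exist constants R₀, k₀ > 0 such that the function V₋(x) = log(|x|² + k₀) − R₀ satisfies (L V₋)(x) ≥ 0 for every x ∈ ℝ² (i.e., −L V₋ ≤ 0 in ℝ²) and V₋(x) ≤ 0 for every x ∈ H. -/

import Mathlib

open MeasureTheory Real Filter

abbrev E2 := EuclideanSpace ℝ (Fin 2)

/-- The nonlocal operator `L g = J * g - g`. -/
noncomputable def nonlocalOp (J g : E2 → ℝ) (x : E2) : ℝ :=
  (∫ y : E2, J (x - y) * g y) - g x

lemma key_real (C k r s t : ℝ) (hk : 0 < k) (hC : k ≤ C) (hr : 0 ≤ r) (hr2 : r ≤ 2*k)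
    (hst : s^2 + t^2 = (C-k)*r) :
    C^4 ≤ (C+r-2*s)*(C+r+2*s)*((C+r-2*t)*(C+r+2*t)) := by
  have hCpos : (0:ℝ) < C := lt_of_lt_of_le hk hC
  have e1 : C^2 ≤ (C+r)^2 := by nlinarith
  have e2 : 4*k*r*C^2 ≤ 4*k*r*(C+r)^2 :=
    mul_le_mul_of_nonneg_left e1 (by positivity)
  have e3 : 2*C^2*r*r ≤ 4*k*r*C^2 := by
    nlinarith [mul_nonneg (mul_nonneg hr (sq_nonneg C)) (by linarith : (0:ℝ) ≤ 2*k - r)]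
  have h1 : C^4 ≤ (C+r)^2 * ((C-r)^2 + 4*k*r) := by nlinarith [sq_nonneg (r*r), e2, e3]
  have h2 : (C+r)^2 * ((C-r)^2 + 4*k*r) = (C+r)^2*(C+r)^2 - (C+r)^2*(4*(s^2+t^2)) := by
    rw [hst]; ring
  nlinarith [sq_nonneg (s*t)]

open Module in
lemma key_geom [Fact (finrank ℝ E2 = 2)] (o : Orientation ℝ E2 (Fin 2))
    (k : ℝ) (hk : 0 < k) (x z : E2) (hz : ‖z‖^2 ≤ 2*k) :
    4 * Real.log (‖x‖^2 + k) ≤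
      Real.log (‖x - z‖^2 + k) + Real.log (‖x + z‖^2 + k) +
      (Real.log (‖x - o.rightAngleRotation z‖^2 + k) +
       Real.log (‖x + o.rightAngleRotation z‖^2 + k)) := by
  set J := o.rightAngleRotation with hJdef
  set s := (inner ℝ x z : ℝ) with hsdef
  set t := (inner ℝ x (J z) : ℝ) with htdef
  have hJ : ‖J z‖ = ‖z‖ := LinearIsometryEquiv.norm_map _ z
  set C := ‖x‖^2 + k with hC
  set r := ‖z‖^2 with hr
  have e1 : ‖x - z‖^2 + k = C + r - 2*s := by
    rw [norm_sub_sq_real, hC, hr, hsdef]; ring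
  have e2 : ‖x + z‖^2 + k = C + r + 2*s := by
    rw [norm_add_sq_real, hC, hr, hsdef]; ring
  have e3 : ‖x - J z‖^2 + k = C + r - 2*t := by
    rw [norm_sub_sq_real, hJ, hC, hr, htdef]; ring
  have e4 : ‖x + J z‖^2 + k = C + r + 2*t := by
    rw [norm_add_sq_real, hJ, hC, hr, htdef]; ring
  have hst : s^2 + t^2 = ‖x‖^2 * ‖z‖^2 := by
    have h1 : ((inner ℝ x (J z) : ℝ)) = -(o.areaForm x z) := o.inner_rightAngleRotation_right x z
    have h2 := o.inner_sq_add_areaForm_sq x z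
    rw [hsdef, htdef, h1, neg_sq]
    exact h2
  have hCk : k ≤ C := by
    rw [hC]; nlinarith [sq_nonneg ‖x‖]
  have hr0 : (0:ℝ) ≤ r := sq_nonneg _
  have hkey : C^4 ≤ (C+r-2*s)*(C+r+2*s)*((C+r-2*t)*(C+r+2*t)) := by
    apply key_real C k r s t hk hCk hr0 hz
    rw [hst, hC, hr]; ring
  have hA : 0 < C + r - 2*s := by rw [← e1]; positivity
  have hB : 0 < C + r + 2*s := by rw [← e2]; positivity
  have hU : 0 < C + r - 2*t := by rw [← e3]; positivity
  have hV : 0 < C + r + 2*t := by rw [← e4]; positivity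
  have hCpos : 0 < C := lt_of_lt_of_le hk hCk
  rw [e1, e2, e3, e4, ← Real.log_mul hA.ne' hB.ne', ← Real.log_mul hU.ne' hV.ne',
    ← Real.log_mul (by positivity) (by positivity)]
  calc 4 * Real.log C = Real.log (C^4) := by
        rw [Real.log_pow]; push_cast; ring
    _ ≤ _ := Real.log_le_log (by positivity) hkey

theorem stmt5
    (J : E2 → ℝ) (d : ℝ) (hd : 0 < d)
    (hJC2 : ContDiff ℝ 2 J)
    (hJsupp : HasCompactSupport J)
    (hJrad : ∀ x y : E2, ‖x‖ = ‖y‖ → J x = J y)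
    (hJpos : ∀ x : E2, ‖x‖ < d → 0 < J x)
    (hJzero : ∀ x : E2, d ≤ ‖x‖ → J x = 0)
    (hJint : (∫ x : E2, J x) = 1)
    (H : Set E2) (R : ℝ) (hR2 : 2 < R)
    (hHopen : IsOpen H)
    (hH2 : Metric.ball (0 : E2) 2 ⊆ H)
    (hHR : H ⊆ Metric.ball (0 : E2) R) :
    ∃ R₀ > (0:ℝ), ∃ k₀ > (0:ℝ),
      (∀ x : E2, 0 ≤ nonlocalOp J (fun y => Real.log (‖y‖ ^ 2 + k₀) - R₀) x) ∧
      (∀ x ∈ H, Real.log (‖x‖ ^ 2 + k₀) - R₀ ≤ 0) := by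
  haveI : Fact (Module.finrank ℝ E2 = 2) := ⟨finrank_euclideanSpace_fin⟩
  set o : Orientation ℝ E2 (Fin 2) :=
    Module.Basis.orientation (EuclideanSpace.basisFun (Fin 2) ℝ).toBasis with ho
  set ρ : E2 ≃ₗᵢ[ℝ] E2 := o.rightAngleRotation with hρ
  set k : ℝ := d ^ 2 with hk
  have hkpos : 0 < k := by positivity
  set g : E2 → ℝ := fun y => Real.log (‖y‖ ^ 2 + k) with hg
  set R₀ : ℝ := Real.log (R ^ 2 + k) + 1 with hR₀
  have hR₀pos : 0 < R₀ := by
    have : (0:ℝ) < Real.log (R ^ 2 + k) := Real.log_pos (by nlinarith)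
    linarith
  -- continuity facts
  have hJcont : Continuous J := hJC2.continuous
  have hgcont : Continuous g := by
    apply Continuous.log
    · exact (continuous_norm.pow 2).add continuous_const
    · intro y; positivity
  have hJnn : ∀ z : E2, 0 ≤ J z := by
    intro z
    rcases lt_or_ge ‖z‖ d with h | h
    · exact (hJpos z h).le
    · rw [hJzero z h]
  -- integrability of J times any continuous function
  have hint : ∀ h : E2 → ℝ, Continuous h → Integrable (fun z => J z * h z) := by
    intro h hc
    exact (hJcont.mul hc).integrable_of_hasCompactSupport hJsupp.mul_right
  -- the main mean-value inequality
  have hmain : ∀ x : E2, g x ≤ ∫ z : E2, J z * g (x - z) := by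
    intro x
    have c1 : Continuous fun z : E2 => g (x - z) := hgcont.comp (continuous_const.sub continuous_id)
    have c2 : Continuous fun z : E2 => g (x + z) := hgcont.comp (continuous_const.add continuous_id)
    have c3 : Continuous fun z : E2 => g (x - ρ z) :=
      hgcont.comp (continuous_const.sub ρ.continuous)
    have c4 : Continuous fun z : E2 => g (x + ρ z) :=
      hgcont.comp (continuous_const.add ρ.continuous)
    have i1 := hint _ c1
    have i2 := hint _ c2
    have i3 := hint _ c3
    have i4 := hint _ c4
    have hJneg : ∀ z : E2, J (-z) = J z := fun z => hJrad _ _ (norm_neg z)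
    have hJrot : ∀ z : E2, J (ρ z) = J z := fun z => hJrad _ _ (ρ.norm_map z)
    have eq2 : (∫ z : E2, J z * g (x + z)) = ∫ z : E2, J z * g (x - z) := by
      rw [← integral_neg_eq_self (fun z : E2 => J z * g (x - z)) volume]
      congr 1; funext z
      rw [hJneg, sub_neg_eq_add]
    have hρmp : MeasurePreserving ρ (volume : Measure E2) volume :=
      ρ.measurePreserving
    have eq3 : (∫ z : E2, J z * g (x - ρ z)) = ∫ z : E2, J z * g (x - z) := by
      rw [← hρmp.integral_comp ρ.toHomeomorph.measurableEmbedding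
        (fun z : E2 => J z * g (x - z))]
      congr 1; funext z
      rw [hJrot]
    have eq4 : (∫ z : E2, J z * g (x + ρ z)) = ∫ z : E2, J z * g (x - z) := by
      rw [← eq3, ← integral_neg_eq_self (fun z : E2 => J z * g (x - ρ z)) volume]
      congr 1; funext z
      show J z * g (x + ρ z) = J (-z) * g (x - ρ (-z))
      rw [hJneg, map_neg, sub_neg_eq_add]
    have hsum : (∫ z : E2, J z * (g (x - z) + g (x + z) + (g (x - ρ z) + g (x + ρ z))))
        = 4 * ∫ z : E2, J z * g (x - z) := by
      have : (fun z : E2 => J z * (g (x - z) + g (x + z) + (g (x - ρ z) + g (x + ρ z))))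
          = fun z : E2 => J z * g (x - z) + J z * g (x + z)
              + (J z * g (x - ρ z) + J z * g (x + ρ z)) := by
        funext z; ring
      have A := integral_add (i1.add i2) (i3.add i4)
      have B := integral_add i1 i2
      have C := integral_add i3 i4
      simp only [Pi.add_apply] at A
      rw [this, A, B, C, eq2, eq3, eq4]
      ring
    have hmono : (∫ z : E2, J z * (4 * g x))
        ≤ ∫ z : E2, J z * (g (x - z) + g (x + z) + (g (x - ρ z) + g (x + ρ z))) := by
      apply integral_mono
      · exact hint _ continuous_const
      · exact hint _ (((c1.add c2).add (c3.add c4)))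
      · intro z
        rcases lt_or_ge ‖z‖ d with h | h
        · have hz2 : ‖z‖ ^ 2 ≤ 2 * k := by
            rw [hk]; nlinarith [norm_nonneg z]
          have := key_geom o k hkpos x z hz2
          exact mul_le_mul_of_nonneg_left (by simpa [hg] using this) (hJnn z)
        · simp [hJzero z h]
    have hconst : (∫ z : E2, J z * (4 * g x)) = 4 * g x := by
      rw [integral_mul_const, hJint, one_mul]
    rw [hconst, hsum] at hmono
    linarith
  refine ⟨R₀, hR₀pos, k, hkpos, ?_, ?_⟩
  · intro x
    have hdone : (∫ y : E2, J (x - y) * (g y - R₀)) = (∫ z : E2, J z * g (x - z)) - R₀ := by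
      have step1 : (∫ y : E2, J (x - y) * (g y - R₀))
          = ∫ z : E2, J z * (g (x - z) - R₀) := by
        rw [← integral_sub_left_eq_self (fun z : E2 => J z * (g (x - z) - R₀)) volume x]
        congr 1; funext y
        rw [sub_sub_cancel]
      have c1 : Continuous fun z : E2 => g (x - z) :=
        hgcont.comp (continuous_const.sub continuous_id)
      rw [step1]
      have : (fun z : E2 => J z * (g (x - z) - R₀))
          = fun z : E2 => J z * g (x - z) - J z * R₀ := by funext z; ring
      rw [this, integral_sub (hint _ c1) (hint _ continuous_const), integral_mul_const,
        hJint, one_mul]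
    have hx := hmain x
    simp only [nonlocalOp]
    have : (∫ y : E2, J (x - y) * (Real.log (‖y‖ ^ 2 + k) - R₀))
        = (∫ z : E2, J z * g (x - z)) - R₀ := hdone
    rw [this]
    simp only [hg] at hx ⊢
    linarith
  · intro x hx
    have hxR : ‖x‖ < R := by simpa using hHR hx
    have h1 : Real.log (‖x‖ ^ 2 + k) ≤ Real.log (R ^ 2 + k) := by
      apply Real.log_le_log (by positivity)
      nlinarith [norm_nonneg x]
    rw [hR₀]; linarith
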